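/- Fix integers 0 < m < n and rational numbers a₀, …, a_{m−1}. Let R = MvPolynomial (Fin 2) ℚ with generators x and u, let T be the exterior algebra Λ_R(Fin 2 → R) of the free rank-2 R-module, with y and v the images under ι of the two standard basis vectors, and set P = u^{m+1} + Σ_{i=0}^{m−1} aᵢ uⁱ x^{m+1−i} ∈ R. Let D : T → T be the unique R-linear map with D(1) = 0, D(y) = algebraMap(x^{n+1}), D(v) = algebraMap(P), and D(y * v) = algebraMap(x^{n+1}) * v − algebraMap(P) * y. Let Q = Polynomial ℚ with generator x′, let B be the exterior algebra Λ_Q(Q) of the free rank-1 Q-module, with y′ = ι(1), and let d : B → B be the unique Q-linear map with d(1) = 0 and d(y′) = algebraMap(x′^{n+1}). Then the following are equivalent: (a) there exist q ∈ ℚ and a ℚ-algebra homomorphism S : T → B with S(algebraMap x) = algebraMap x′, S(algebraMap u) = q • algebraMap x′, S(y) = y′, S(v) = 0, and S ∘ D = d ∘ S; (b) the polynomial z^{m+1} + a_{m−1} z^{m−1} + ⋯ + a₁ z + a₀ has a root in ℚ. -/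

import Mathlib

set_option maxHeartbeats 1600000

open ExteriorAlgebra

/-- The base ring `R = ℚ[x, u]` of the relative Sullivan model of a fibration
`ℂP^m → E → ℂP^n`. -/
abbrev ModelR : Type := MvPolynomial (Fin 2) ℚ

/-- The relative Sullivan model `T = Λ_R(R y ⊕ R v)` of a fibration `ℂP^m → E → ℂP^n`. -/
abbrev ModelT : Type := ExteriorAlgebra ModelR (Fin 2 → ModelR)

/-- The base ring `Q = ℚ[x′]` of the Sullivan minimal model of `ℂP^n`. -/
abbrev ModelQ : Type := Polynomial ℚ

/-- The Sullivan minimal model `B = Λ_Q(Q y′)` of `ℂP^n`. -/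
abbrev ModelB : Type := ExteriorAlgebra ModelQ ModelQ

noncomputable def psi (z : ℚ) : ModelR →ₐ[ℚ] ModelQ :=
  MvPolynomial.aeval ![Polynomial.X, z • Polynomial.X]

theorem psi_X0 (z : ℚ) : psi z (MvPolynomial.X 0) = Polynomial.X := by
  unfold psi
  simp only [MvPolynomial.aeval_X, Matrix.cons_val_zero]

theorem psi_X1 (z : ℚ) : psi z (MvPolynomial.X 1) = z • Polynomial.X := by
  unfold psi
  simp only [MvPolynomial.aeval_X, Matrix.cons_val_one, Matrix.head_cons, Matrix.cons_val_zero]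

theorem psi_P (m : ℕ) (a : Fin m → ℚ) (q : ℚ) :
    psi q ((MvPolynomial.X 1 : ModelR) ^ (m + 1) +
        ∑ i : Fin m, MvPolynomial.C (a i) * (MvPolynomial.X 1) ^ (i : ℕ)
          * (MvPolynomial.X 0) ^ (m + 1 - (i : ℕ)))
    = Polynomial.C (q ^ (m + 1) + ∑ i : Fin m, a i * q ^ (i : ℕ)) * Polynomial.X ^ (m + 1) := by
  unfold psi
  rw [map_add, map_pow, map_sum]
  simp only [MvPolynomial.aeval_X, Matrix.cons_val_one, Matrix.head_cons, Matrix.cons_val_zero,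
    map_mul, map_pow, MvPolynomial.aeval_C, Polynomial.algebraMap_eq]
  have h1 : (q • Polynomial.X : ModelQ) ^ (m + 1)
      = Polynomial.C (q ^ (m + 1)) * Polynomial.X ^ (m + 1) := by
    rw [smul_pow, Polynomial.smul_eq_C_mul]
  have h2 : ∀ i : Fin m, Polynomial.C (a i) * (q • Polynomial.X : ModelQ) ^ (i : ℕ)
      * Polynomial.X ^ (m + 1 - (i : ℕ))
      = Polynomial.C (a i * q ^ (i : ℕ)) * Polynomial.X ^ (m + 1) := by
    intro i
    rw [smul_pow, Polynomial.smul_eq_C_mul, ← mul_assoc, ← Polynomial.C_mul]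
    rw [mul_assoc, ← pow_add]
    congr 2
    omega
  rw [h1, Finset.sum_congr rfl fun i _ => h2 i, ← Finset.sum_mul, ← add_mul,
    ← map_sum Polynomial.C _ _, ← Polynomial.C_add]

theorem algB_smul (c : ℚ) (p : ModelQ) :
    algebraMap ModelQ ModelB (c • p) = c • algebraMap ModelQ ModelB p := by
  rw [Algebra.smul_def (A := ModelQ), map_mul, ← IsScalarTower.algebraMap_apply,
    ← Algebra.smul_def]

noncomputable def algRB (z : ℚ) : Algebra ModelR ModelB :=
  ((algebraMap ModelQ ModelB).comp (psi z).toRingHom).toAlgebra' fun c x =>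
    Algebra.commutes ((psi z) c) x

theorem algRB_algebraMap (z : ℚ) (r : ModelR) :
    (@algebraMap ModelR ModelB _ _ (algRB z)) r = algebraMap ModelQ ModelB (psi z r) := rfl

theorem algRB_smul (z : ℚ) (r : ModelR) (b : ModelB) :
    letI := algRB z
    r • b = psi z r • b := by
  letI := algRB z
  show r • b = psi z r • b
  rw [Algebra.smul_def, Algebra.smul_def, algRB_algebraMap]

noncomputable def fmap (z : ℚ) :
    letI := algRB z
    (Fin 2 → ModelR) →ₗ[ModelR] ModelB :=
  letI := algRB z
  { toFun := fun w => psi z (w 0) • ι ModelQ (1 : ModelQ)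
    map_add' := fun w₁ w₂ => by simp [add_smul]
    map_smul' := fun r w => by
      simp only [Pi.smul_apply, smul_eq_mul, map_mul, RingHom.id_apply]
      rw [algRB_smul, mul_smul] }

theorem fmap_cond (z : ℚ) : ∀ w, fmap z w * fmap z w = 0 := fun w => by
  show (psi z (w 0) • ι ModelQ (1 : ModelQ)) * (psi z (w 0) • ι ModelQ (1 : ModelQ)) = 0
  rw [smul_mul_smul_comm, ι_sq_zero, smul_zero]

noncomputable def SfunR (z : ℚ) :
    letI := algRB z
    ModelT →ₐ[ModelR] ModelB :=
  letI := algRB z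
  ExteriorAlgebra.lift ModelR ⟨fmap z, fmap_cond z⟩

theorem SfunR_algebraMap (z : ℚ) (r : ModelR) :
    SfunR z (algebraMap ModelR ModelT r) = algebraMap ModelQ ModelB (psi z r) := by
  letI := algRB z
  rw [AlgHom.commutes (SfunR z) r, algRB_algebraMap]

theorem SfunR_ι (z : ℚ) (w : Fin 2 → ModelR) :
    SfunR z (ι ModelR w) = psi z (w 0) • ι ModelQ (1 : ModelQ) := by
  letI := algRB z
  exact ExteriorAlgebra.lift_ι_apply (R := ModelR) (A := ModelB) (fmap z) (fmap_cond z) w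

noncomputable def Sfun (z : ℚ) : ModelT →ₐ[ℚ] ModelB :=
  letI := algRB z
  { toRingHom := (SfunR z).toRingHom
    commutes' := fun c => by
      show SfunR z (algebraMap ℚ ModelT c) = algebraMap ℚ ModelB c
      rw [IsScalarTower.algebraMap_apply ℚ ModelR ModelT, SfunR_algebraMap, (psi z).commutes,
        ← IsScalarTower.algebraMap_apply] }

theorem Sfun_apply (z : ℚ) (t : ModelT) : Sfun z t = SfunR z t := by
  letI := algRB z
  rfl

theorem span_lemma (y v : ModelT)
    (hy : y = ι ModelR (Pi.single (0 : Fin 2) (1 : ModelR)))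
    (hv : v = ι ModelR (Pi.single (1 : Fin 2) (1 : ModelR))) (t : ModelT) :
    t ∈ Submodule.span ModelR ({1, y, v, y * v} : Set ModelT) := by
  have s00 : y * y = 0 := by rw [hy]; exact ι_sq_zero _
  have s11 : v * v = 0 := by rw [hv]; exact ι_sq_zero _
  have s10 : v * y = -(y * v) := by
    rw [hy, hv]
    exact eq_neg_of_add_eq_zero_right (ι_add_mul_swap _ _)
  have hA : y * (y * v) = 0 := by rw [← mul_assoc, s00, zero_mul]
  have hB : v * (y * v) = 0 := by rw [← mul_assoc, s10, neg_mul, mul_assoc, s11, mul_zero, neg_zero]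
  have hC : (y * v) * y = 0 := by rw [mul_assoc, s10, mul_neg, hA, neg_zero]
  have hD : (y * v) * v = 0 := by rw [mul_assoc, s11, mul_zero]
  have hE : (y * v) * (y * v) = 0 := by rw [← mul_assoc, hC, zero_mul]
  have hmul : ∀ a ∈ Submodule.span ModelR ({1, y, v, y * v} : Set ModelT),
      ∀ b ∈ Submodule.span ModelR ({1, y, v, y * v} : Set ModelT),
      a * b ∈ Submodule.span ModelR ({1, y, v, y * v} : Set ModelT) := by
    intro a ha b hb
    induction ha using Submodule.span_induction with
    | mem g hg =>
      induction hb using Submodule.span_induction with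
      | mem g2 hg2 =>
        simp only [Set.mem_insert_iff, Set.mem_singleton_iff] at hg hg2
        rcases hg with rfl | rfl | rfl | rfl <;> rcases hg2 with rfl | rfl | rfl | rfl <;>
          (try simp only [one_mul, mul_one, s00, s11, s10, hA, hB, hC, hD, hE]) <;>
          first
            | exact Submodule.zero_mem _
            | exact neg_mem (Submodule.subset_span (by simp))
            | exact Submodule.subset_span (by simp)
      | zero => rw [mul_zero]; exact Submodule.zero_mem _
      | add b1 b2 _ _ h1 h2 => rw [mul_add]; exact add_mem h1 h2
      | smul r b1 _ h1 => rw [mul_smul_comm]; exact Submodule.smul_mem _ _ h1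
    | zero => rw [zero_mul]; exact Submodule.zero_mem _
    | add a1 a2 _ _ h1 h2 => rw [add_mul]; exact add_mem h1 h2
    | smul r a1 _ h1 => rw [smul_mul_assoc]; exact Submodule.smul_mem _ _ h1
  induction t using ExteriorAlgebra.induction with
  | algebraMap r =>
    rw [Algebra.algebraMap_eq_smul_one]
    exact Submodule.smul_mem _ _ (Submodule.subset_span (by simp))
  | ι w =>
    have hw : w = w 0 • (Pi.single (0 : Fin 2) (1 : ModelR) : Fin 2 → ModelR)
        + w 1 • (Pi.single (1 : Fin 2) (1 : ModelR) : Fin 2 → ModelR) := by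
      funext i; fin_cases i <;> simp
    rw [hw, map_add, map_smul, map_smul, ← hy, ← hv]
    exact add_mem (Submodule.smul_mem _ _ (Submodule.subset_span (by simp)))
      (Submodule.smul_mem _ _ (Submodule.subset_span (by simp)))
  | mul a b ha hb => exact hmul a ha b hb
  | add a b ha hb => exact add_mem ha hb

theorem stmt5 (m n : ℕ) (hm : 0 < m) (hmn : m < n) (a : Fin m → ℚ)
    (x u : ModelR) (hx : x = MvPolynomial.X 0) (hu : u = MvPolynomial.X 1)
    (y v : ModelT)
    (hy : y = ι ModelR (Pi.single (0 : Fin 2) (1 : ModelR)))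
    (hv : v = ι ModelR (Pi.single (1 : Fin 2) (1 : ModelR)))
    (P : ModelR)
    (hP : P = u ^ (m + 1) +
      ∑ i : Fin m, MvPolynomial.C (a i) * u ^ (i : ℕ) * x ^ (m + 1 - (i : ℕ)))
    (D : ModelT →ₗ[ModelR] ModelT)
    (hD1 : D 1 = 0)
    (hDy : D y = algebraMap ModelR ModelT (x ^ (n + 1)))
    (hDv : D v = algebraMap ModelR ModelT P)
    (hDyv : D (y * v) =
      algebraMap ModelR ModelT (x ^ (n + 1)) * v - algebraMap ModelR ModelT P * y)
    (x' : ModelQ) (hx' : x' = Polynomial.X)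
    (y' : ModelB) (hy' : y' = ι ModelQ (1 : ModelQ))
    (d : ModelB →ₗ[ModelQ] ModelB)
    (hd1 : d 1 = 0)
    (hdy' : d y' = algebraMap ModelQ ModelB (x' ^ (n + 1))) :
    (∃ (q : ℚ) (S : ModelT →ₐ[ℚ] ModelB),
        S (algebraMap ModelR ModelT x) = algebraMap ModelQ ModelB x' ∧
        S (algebraMap ModelR ModelT u) = q • algebraMap ModelQ ModelB x' ∧
        S y = y' ∧ S v = 0 ∧ ∀ t : ModelT, S (D t) = d (S t)) ↔
      (∃ z : ℚ, z ^ (m + 1) + ∑ i : Fin m, a i * z ^ (i : ℕ) = 0) := by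
  subst hP hx hu hx' hy'
  constructor
  · rintro ⟨q, S, hSx, hSu, hSy, hSv, hcomm⟩
    refine ⟨q, ?_⟩
    have h0 : S (algebraMap ModelR ModelT ((MvPolynomial.X 1 : ModelR) ^ (m + 1) +
        ∑ i : Fin m, MvPolynomial.C (a i) * (MvPolynomial.X 1) ^ (i : ℕ)
          * (MvPolynomial.X 0) ^ (m + 1 - (i : ℕ)))) = 0 := by
      rw [← hDv, hcomm v, hSv, map_zero]
    have hcompat : ∀ r : ModelR,
        S (algebraMap ModelR ModelT r) = algebraMap ModelQ ModelB (psi q r) := by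
      have hext : (S.comp (IsScalarTower.toAlgHom ℚ ModelR ModelT))
          = (IsScalarTower.toAlgHom ℚ ModelQ ModelB).comp (psi q) := by
        apply MvPolynomial.algHom_ext
        intro i
        fin_cases i
        · show S (algebraMap ModelR ModelT (MvPolynomial.X 0))
              = algebraMap ModelQ ModelB (psi q (MvPolynomial.X 0))
          rw [psi_X0]
          exact hSx
        · show S (algebraMap ModelR ModelT (MvPolynomial.X 1))
              = algebraMap ModelQ ModelB (psi q (MvPolynomial.X 1))
          rw [psi_X1, algB_smul]
          exact hSu
      intro r
      have hr := DFunLike.congr_fun hext r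
      simpa only [AlgHom.coe_comp, Function.comp_apply, IsScalarTower.coe_toAlgHom'] using hr
    rw [hcompat, psi_P m a q] at h0
    have h1 : (Polynomial.C (q ^ (m + 1) + ∑ i : Fin m, a i * q ^ (i : ℕ))
        * Polynomial.X ^ (m + 1) : ModelQ) = 0 :=
      (ExteriorAlgebra.algebraMap_leftInverse (M := ModelQ)).injective (by simpa using h0)
    rcases mul_eq_zero.mp h1 with h | h
    · exact Polynomial.C_eq_zero.mp h
    · exact absurd h (pow_ne_zero _ Polynomial.X_ne_zero)
  · rintro ⟨z, hz⟩
    have hq0 : ∀ r : ModelR,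
        Sfun z (algebraMap ModelR ModelT r) = algebraMap ModelQ ModelB (psi z r) := fun r => by
      rw [Sfun_apply, SfunR_algebraMap]
    have hψP : psi z ((MvPolynomial.X 1 : ModelR) ^ (m + 1) +
        ∑ i : Fin m, MvPolynomial.C (a i) * (MvPolynomial.X 1) ^ (i : ℕ)
          * (MvPolynomial.X 0) ^ (m + 1 - (i : ℕ))) = 0 := by
      rw [psi_P m a z, hz, map_zero, zero_mul]
    have hSy : Sfun z y = ι ModelQ (1 : ModelQ) := by
      rw [hy, Sfun_apply, SfunR_ι, Pi.single_eq_same, map_one, one_smul]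
    have hSv : Sfun z v = 0 := by
      rw [hv, Sfun_apply, SfunR_ι, Pi.single_eq_of_ne (by decide), map_zero, zero_smul]
    refine ⟨z, Sfun z, ?_, ?_, hSy, hSv, ?_⟩
    · rw [hq0, psi_X0]
    · rw [hq0, psi_X1, algB_smul]
    · intro t
      induction span_lemma y v hy hv t using Submodule.span_induction with
      | mem g hg =>
        simp only [Set.mem_insert_iff, Set.mem_singleton_iff] at hg
        rcases hg with rfl | rfl | rfl | rfl
        · rw [hD1, map_zero, map_one, hd1]
        · rw [hDy, hq0, map_pow, psi_X0, hSy, hdy']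
        · rw [hDv, hq0, hψP, map_zero, hSv, map_zero]
        · rw [hDyv, map_sub, map_mul, map_mul, hq0, hq0, hψP, map_zero, zero_mul,
            hSv, mul_zero, sub_zero, map_mul, hSv, mul_zero, map_zero]
      | zero => rw [map_zero, map_zero, map_zero]
      | add t1 t2 _ _ h1 h2 => simp only [map_add, h1, h2]
      | smul r t1 _ h1 =>
        calc Sfun z (D (r • t1)) = Sfun z (algebraMap ModelR ModelT r * D t1) := by
              rw [map_smul, Algebra.smul_def]
          _ = algebraMap ModelQ ModelB (psi z r) * d (Sfun z t1) := by
              rw [map_mul, hq0, h1]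
          _ = d (algebraMap ModelQ ModelB (psi z r) * Sfun z t1) := by
              rw [← Algebra.smul_def, ← Algebra.smul_def, map_smul]
          _ = d (Sfun z (r • t1)) := by
              rw [← hq0, ← map_mul, ← Algebra.smul_def]
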